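/- Assume the anisotropic ADMM scheme, and assume in addition that the sequences (β_t^k) and (β_s^k) are increasing and that the series ∑_{k≥1} √(k/β_t^k) and ∑_{k≥1} √(k/β_s^k) converge. Then the sequence (D_h u^k)_k is a Cauchy sequence in ℝ^N, hence converges; similarly (D_v u^k)_k converges. -/

import Mathlib

open Matrix Filter Topology

/-- Euclidean norm of a vector in `ℝ^n`. -/
noncomputable def enorm {n : ℕ} (v : Fin n → ℝ) : ℝ :=
  Real.sqrt (∑ i, (v i) ^ 2)

/-- ℓ⁰ "norm": number of nonzero entries of a vector. -/
noncomputable def l0 {n : ℕ} (v : Fin n → ℝ) : ℕ :=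
  (Finset.univ.filter fun i => v i ≠ 0).card

/-- Isotropic ℓ⁰ count: number of indices where the pair of entries is nonzero. -/
noncomputable def l02 {n : ℕ} (zh zv : Fin n → ℝ) : ℕ :=
  (Finset.univ.filter fun i => zh i ≠ 0 ∨ zv i ≠ 0).card

lemma l0_le {n : ℕ} (v : Fin n → ℝ) : l0 v ≤ n := by
  classical
  calc l0 v ≤ Finset.univ.card := Finset.card_filter_le _ _
  _ = n := Finset.card_fin n

lemma enorm_eq_norm {n : ℕ} (v : Fin n → ℝ) :
    _root_.enorm v = ‖(WithLp.toLp 2 v : EuclideanSpace ℝ (Fin n))‖ := by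
  rw [EuclideanSpace.norm_eq]
  unfold _root_.enorm
  congr 1
  refine Finset.sum_congr rfl fun i _ => ?_
  simp only [PiLp.toLp_apply, Real.norm_eq_abs, sq_abs]

lemma enorm_nonneg' {n : ℕ} (v : Fin n → ℝ) : 0 ≤ _root_.enorm v := Real.sqrt_nonneg _

lemma enorm_zero' {n : ℕ} : _root_.enorm (0 : Fin n → ℝ) = 0 := by
  simp [_root_.enorm]

lemma enorm_add_le' {n : ℕ} (a b : Fin n → ℝ) : _root_.enorm (a + b) ≤ _root_.enorm a + _root_.enorm b := by
  rw [enorm_eq_norm, enorm_eq_norm, enorm_eq_norm, WithLp.toLp_add]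
  exact norm_add_le _ _

lemma enorm_neg' {n : ℕ} (a : Fin n → ℝ) : _root_.enorm (-a) = _root_.enorm a := by
  rw [enorm_eq_norm, enorm_eq_norm, WithLp.toLp_neg]
  exact norm_neg _

lemma abs_apply_le_enorm {n : ℕ} (v : Fin n → ℝ) (i : Fin n) : |v i| ≤ _root_.enorm v := by
  rw [_root_.enorm, ← Real.sqrt_sq_eq_abs]
  exact Real.sqrt_le_sqrt (Finset.single_le_sum (fun j _ => sq_nonneg (v j)) (Finset.mem_univ i))

lemma dist_le_enorm {n : ℕ} (a b : Fin n → ℝ) : dist a b ≤ _root_.enorm (a - b) := by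
  rw [dist_pi_le_iff (enorm_nonneg' _)]
  intro i
  rw [Real.dist_eq]
  exact (abs_apply_le_enorm (a - b) i)

lemma cauchy_aux {N : ℕ} (x : ℕ → Fin N → ℝ) (β : ℕ → ℝ) (hβ : ∀ k, 0 < β k)
    (c d : ℝ) (hc : 0 ≤ c) (hd : 0 ≤ d)
    (hΔ : ∀ k : ℕ, _root_.enorm (x (k+1) - x k) ^ 2 ≤ (c + d * (k+1)) / β k)
    (hsum : Summable fun k : ℕ => Real.sqrt ((k : ℝ) / β k)) :
    CauchySeq x := by
  apply cauchySeq_of_summable_dist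
  have key : ∀ k : ℕ, 1 ≤ k →
      dist (x k) (x (k+1)) ≤ Real.sqrt (c + 2*d) * Real.sqrt ((k : ℝ) / β k) := by
    intro k hk
    have h1 : dist (x k) (x (k+1)) ≤ _root_.enorm (x (k+1) - x k) := by
      rw [dist_comm]
      exact dist_le_enorm _ _
    have h2 : _root_.enorm (x (k+1) - x k) ≤ Real.sqrt ((c + d * (k+1)) / β k) := by
      have := Real.sqrt_le_sqrt (hΔ k)
      rwa [Real.sqrt_sq (enorm_nonneg' _)] at this
    have h3 : (c + d * (k+1)) / β k ≤ (c + 2*d) * ((k : ℝ) / β k) := by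
      rw [div_le_iff₀ (hβ k)]
      have he : (c + 2*d) * ((k:ℝ) / β k) * β k = (c + 2*d) * (k:ℝ) := by
        field_simp
        rw [mul_div_assoc, div_self (hβ k).ne', mul_one]
      rw [he]
      have hk1 : (1 : ℝ) ≤ (k : ℝ) := by exact_mod_cast hk
      nlinarith
    have h4 : Real.sqrt ((c + d * (k+1)) / β k) ≤ Real.sqrt (c + 2*d) * Real.sqrt ((k:ℝ) / β k) := by
      rw [← Real.sqrt_mul (by linarith)]
      exact Real.sqrt_le_sqrt h3
    linarith
  have hsum1 : Summable fun k : ℕ =>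
      Real.sqrt (c + 2*d) * Real.sqrt (((k+1 : ℕ) : ℝ) / β (k+1)) := by
    exact (summable_nat_add_iff (f := fun k : ℕ => Real.sqrt (c + 2*d) * Real.sqrt ((k:ℝ)/β k)) 1).2 (hsum.mul_left _)
  apply (summable_nat_add_iff (f := fun n => dist (x n) (x (n+1))) 1).1
  exact Summable.of_nonneg_of_le (fun k => dist_nonneg) (fun k => key (k+1) (Nat.le_add_left 1 k)) hsum1

/-- under the growth conditions, the gradient sequences
(D_h u^k) and (D_v u^k) are Cauchy, hence convergent. -/
theorem anisotropic_ADMM_gradient_cauchy (M N : ℕ) (A : Matrix (Fin M) (Fin N) ℝ)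
    (Dh Dv : Matrix (Fin N) (Fin N) ℝ) (g : Fin M → ℝ) (μ : ℝ) (hμ : 0 < μ)
    (t s u lt ls : ℕ → Fin N → ℝ) (βt βs : ℕ → ℝ)
    (hβt : ∀ k, 0 < βt k) (hβs : ∀ k, 0 < βs k)
    -- (i): t^{k+1} minimizes the anisotropic ℓ⁰ subproblem
    (ht : ∀ k, ∀ t' : Fin N → ℝ,
      μ * (l0 (t (k + 1)) : ℝ)
          + βt k / 2 * _root_.enorm (t (k + 1) - (Dh.mulVec (u k) + (βt k)⁻¹ • lt k)) ^ 2
        ≤ μ * (l0 t' : ℝ)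
          + βt k / 2 * _root_.enorm (t' - (Dh.mulVec (u k) + (βt k)⁻¹ • lt k)) ^ 2)
    -- (ii): s^{k+1} minimizes the anisotropic ℓ⁰ subproblem
    (hs : ∀ k, ∀ s' : Fin N → ℝ,
      μ * (l0 (s (k + 1)) : ℝ)
          + βs k / 2 * _root_.enorm (s (k + 1) - (Dv.mulVec (u k) + (βs k)⁻¹ • ls k)) ^ 2
        ≤ μ * (l0 s' : ℝ)
          + βs k / 2 * _root_.enorm (s' - (Dv.mulVec (u k) + (βs k)⁻¹ • ls k)) ^ 2)
    -- (iii): u^{k+1} minimizes the quadratic subproblem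
    (hu : ∀ k, ∀ v : Fin N → ℝ,
      1 / 2 * _root_.enorm (A.mulVec (u (k + 1)) - g) ^ 2
          + βt k / 2 * _root_.enorm (Dh.mulVec (u (k + 1)) - (t (k + 1) - (βt k)⁻¹ • lt k)) ^ 2
          + βs k / 2 * _root_.enorm (Dv.mulVec (u (k + 1)) - (s (k + 1) - (βs k)⁻¹ • ls k)) ^ 2
        ≤ 1 / 2 * _root_.enorm (A.mulVec v - g) ^ 2
          + βt k / 2 * _root_.enorm (Dh.mulVec v - (t (k + 1) - (βt k)⁻¹ • lt k)) ^ 2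
          + βs k / 2 * _root_.enorm (Dv.mulVec v - (s (k + 1) - (βs k)⁻¹ • ls k)) ^ 2)
    -- (iv): dual updates
    (hlt : ∀ k, lt (k + 1) = lt k - βt k • (t (k + 1) - Dh.mulVec (u (k + 1))))
    (hls : ∀ k, ls (k + 1) = ls k - βs k • (s (k + 1) - Dv.mulVec (u (k + 1))))
    (hmonot : Monotone βt) (hmonos : Monotone βs)
    (hsumt : Summable fun k : ℕ => Real.sqrt ((k : ℝ) / βt k))
    (hsums : Summable fun k : ℕ => Real.sqrt ((k : ℝ) / βs k)) :
    (CauchySeq fun k => Dh.mulVec (u k)) ∧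
    (∃ tstar : Fin N → ℝ, Tendsto (fun k => Dh.mulVec (u k)) atTop (𝓝 tstar)) ∧
    (CauchySeq fun k => Dv.mulVec (u k)) ∧
    (∃ sstar : Fin N → ℝ, Tendsto (fun k => Dv.mulVec (u k)) atTop (𝓝 sstar)) := by
  have hμN : (0:ℝ) ≤ μ * N := mul_nonneg hμ.le (Nat.cast_nonneg N)
  -- Step 1: the ℓ⁰ proximal steps give residual bounds
  have hE1t : ∀ k, βt k * _root_.enorm (t (k+1) - (Dh.mulVec (u k) + (βt k)⁻¹ • lt k)) ^ 2
      ≤ 2*(μ*N) := by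
    intro k
    have h := ht k (Dh.mulVec (u k) + (βt k)⁻¹ • lt k)
    rw [sub_self, enorm_zero'] at h
    have h1 : (0:ℝ) ≤ μ * (l0 (t (k+1)) : ℝ) := mul_nonneg hμ.le (Nat.cast_nonneg _)
    have h2 : μ * ((l0 (Dh.mulVec (u k) + (βt k)⁻¹ • lt k) : ℝ)) ≤ μ * N := by
      apply mul_le_mul_of_nonneg_left _ hμ.le
      exact_mod_cast l0_le _
    simp only [ne_eq, OfNat.ofNat_ne_zero, not_false_eq_true, zero_pow, mul_zero, add_zero] at h
    rw [div_mul_eq_mul_div] at h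
    linarith
  have hE1s : ∀ k, βs k * _root_.enorm (s (k+1) - (Dv.mulVec (u k) + (βs k)⁻¹ • ls k)) ^ 2
      ≤ 2*(μ*N) := by
    intro k
    have h := hs k (Dv.mulVec (u k) + (βs k)⁻¹ • ls k)
    rw [sub_self, enorm_zero'] at h
    have h1 : (0:ℝ) ≤ μ * (l0 (s (k+1)) : ℝ) := mul_nonneg hμ.le (Nat.cast_nonneg _)
    have h2 : μ * ((l0 (Dv.mulVec (u k) + (βs k)⁻¹ • ls k) : ℝ)) ≤ μ * N := by
      apply mul_le_mul_of_nonneg_left _ hμ.le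
      exact_mod_cast l0_le _
    simp only [ne_eq, OfNat.ofNat_ne_zero, not_false_eq_true, zero_pow, mul_zero, add_zero] at h
    rw [div_mul_eq_mul_div] at h
    linarith
  -- Step 2: key energy inequality from the u-step
  have hkey : ∀ k,
      _root_.enorm (A.mulVec (u (k+1)) - g) ^ 2
        + βt k * _root_.enorm (Dh.mulVec (u (k+1)) - (t (k+1) - (βt k)⁻¹ • lt k)) ^ 2
        + βs k * _root_.enorm (Dv.mulVec (u (k+1)) - (s (k+1) - (βs k)⁻¹ • ls k)) ^ 2
      ≤ _root_.enorm (A.mulVec (u k) - g) ^ 2 + 4*(μ*N) := by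
    intro k
    have h := hu k (u k)
    have e1 : Dh.mulVec (u k) - (t (k+1) - (βt k)⁻¹ • lt k)
        = -(t (k+1) - (Dh.mulVec (u k) + (βt k)⁻¹ • lt k)) := by abel
    have e2 : Dv.mulVec (u k) - (s (k+1) - (βs k)⁻¹ • ls k)
        = -(s (k+1) - (Dv.mulVec (u k) + (βs k)⁻¹ • ls k)) := by abel
    rw [e1, e2, enorm_neg', enorm_neg'] at h
    simp only [div_mul_eq_mul_div] at h
    have b1 := hE1t k
    have b2 := hE1s k
    linarith
  -- Step 3: linear growth of the data fidelity term
  have hFb : ∀ k : ℕ, _root_.enorm (A.mulVec (u k) - g)^2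
      ≤ _root_.enorm (A.mulVec (u 0) - g)^2 + 4*(μ*N)*k := by
    intro k
    induction k with
    | zero => simp
    | succ n ih =>
      have h := hkey n
      have n1 : 0 ≤ βt n * _root_.enorm (Dh.mulVec (u (n+1)) - (t (n+1) - (βt n)⁻¹ • lt n)) ^ 2 :=
        mul_nonneg (hβt n).le (sq_nonneg _)
      have n2 : 0 ≤ βs n * _root_.enorm (Dv.mulVec (u (n+1)) - (s (n+1) - (βs n)⁻¹ • ls n)) ^ 2 :=
        mul_nonneg (hβs n).le (sq_nonneg _)
      push_cast
      push_cast at ih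
      linarith
  -- Step 4: bound on the u-step residuals
  have hX2t : ∀ k : ℕ, βt k * _root_.enorm (Dh.mulVec (u (k+1)) - (t (k+1) - (βt k)⁻¹ • lt k)) ^ 2
      ≤ _root_.enorm (A.mulVec (u 0) - g)^2 + 4*(μ*N)*((k:ℝ)+1) := by
    intro k
    have h := hkey k
    have h2 := hFb k
    have n1 : 0 ≤ _root_.enorm (A.mulVec (u (k+1)) - g)^2 := sq_nonneg _
    have n2 : 0 ≤ βs k * _root_.enorm (Dv.mulVec (u (k+1)) - (s (k+1) - (βs k)⁻¹ • ls k)) ^ 2 :=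
      mul_nonneg (hβs k).le (sq_nonneg _)
    linarith
  have hX2s : ∀ k : ℕ, βs k * _root_.enorm (Dv.mulVec (u (k+1)) - (s (k+1) - (βs k)⁻¹ • ls k)) ^ 2
      ≤ _root_.enorm (A.mulVec (u 0) - g)^2 + 4*(μ*N)*((k:ℝ)+1) := by
    intro k
    have h := hkey k
    have h2 := hFb k
    have n1 : 0 ≤ _root_.enorm (A.mulVec (u (k+1)) - g)^2 := sq_nonneg _
    have n2 : 0 ≤ βt k * _root_.enorm (Dh.mulVec (u (k+1)) - (t (k+1) - (βt k)⁻¹ • lt k)) ^ 2 :=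
      mul_nonneg (hβt k).le (sq_nonneg _)
    linarith
  -- Step 5: increments of the gradient sequences
  have hΔt : ∀ k : ℕ, _root_.enorm (Dh.mulVec (u (k+1)) - Dh.mulVec (u k)) ^ 2
      ≤ ((2*_root_.enorm (A.mulVec (u 0) - g)^2 + 4*(μ*N)) + (8*(μ*N)) * ((k:ℝ)+1)) / βt k := by
    intro k
    have hid : Dh.mulVec (u (k+1)) - Dh.mulVec (u k)
        = (Dh.mulVec (u (k+1)) - (t (k+1) - (βt k)⁻¹ • lt k))
          + (t (k+1) - (Dh.mulVec (u k) + (βt k)⁻¹ • lt k)) := by abel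
    have htri : _root_.enorm (Dh.mulVec (u (k+1)) - Dh.mulVec (u k))
        ≤ _root_.enorm (Dh.mulVec (u (k+1)) - (t (k+1) - (βt k)⁻¹ • lt k))
          + _root_.enorm (t (k+1) - (Dh.mulVec (u k) + (βt k)⁻¹ • lt k)) := by
      rw [hid]; exact enorm_add_le' _ _
    set X2 := _root_.enorm (Dh.mulVec (u (k+1)) - (t (k+1) - (βt k)⁻¹ • lt k)) with hX2def
    set X1 := _root_.enorm (t (k+1) - (Dh.mulVec (u k) + (βt k)⁻¹ • lt k)) with hX1def
    have hnn : 0 ≤ _root_.enorm (Dh.mulVec (u (k+1)) - Dh.mulVec (u k)) := enorm_nonneg' _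
    have hsq : _root_.enorm (Dh.mulVec (u (k+1)) - Dh.mulVec (u k)) ^ 2 ≤ 2*X2^2 + 2*X1^2 := by
      nlinarith [sq_nonneg (X2 - X1)]
    rw [le_div_iff₀ (hβt k)]
    have b2 := hX2t k
    have b1 := hE1t k
    rw [← hX2def] at b2
    rw [← hX1def] at b1
    nlinarith [mul_le_mul_of_nonneg_right hsq (hβt k).le]
  have hΔs : ∀ k : ℕ, _root_.enorm (Dv.mulVec (u (k+1)) - Dv.mulVec (u k)) ^ 2
      ≤ ((2*_root_.enorm (A.mulVec (u 0) - g)^2 + 4*(μ*N)) + (8*(μ*N)) * ((k:ℝ)+1)) / βs k := by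
    intro k
    have hid : Dv.mulVec (u (k+1)) - Dv.mulVec (u k)
        = (Dv.mulVec (u (k+1)) - (s (k+1) - (βs k)⁻¹ • ls k))
          + (s (k+1) - (Dv.mulVec (u k) + (βs k)⁻¹ • ls k)) := by abel
    have htri : _root_.enorm (Dv.mulVec (u (k+1)) - Dv.mulVec (u k))
        ≤ _root_.enorm (Dv.mulVec (u (k+1)) - (s (k+1) - (βs k)⁻¹ • ls k))
          + _root_.enorm (s (k+1) - (Dv.mulVec (u k) + (βs k)⁻¹ • ls k)) := by
      rw [hid]; exact enorm_add_le' _ _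
    set X2 := _root_.enorm (Dv.mulVec (u (k+1)) - (s (k+1) - (βs k)⁻¹ • ls k)) with hX2def
    set X1 := _root_.enorm (s (k+1) - (Dv.mulVec (u k) + (βs k)⁻¹ • ls k)) with hX1def
    have hnn : 0 ≤ _root_.enorm (Dv.mulVec (u (k+1)) - Dv.mulVec (u k)) := enorm_nonneg' _
    have hsq : _root_.enorm (Dv.mulVec (u (k+1)) - Dv.mulVec (u k)) ^ 2 ≤ 2*X2^2 + 2*X1^2 := by
      nlinarith [sq_nonneg (X2 - X1)]
    rw [le_div_iff₀ (hβs k)]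
    have b2 := hX2s k
    have b1 := hE1s k
    rw [← hX2def] at b2
    rw [← hX1def] at b1
    nlinarith [mul_le_mul_of_nonneg_right hsq (hβs k).le]
  have hc : (0:ℝ) ≤ 2*_root_.enorm (A.mulVec (u 0) - g)^2 + 4*(μ*N) := by
    have := sq_nonneg (_root_.enorm (A.mulVec (u 0) - g))
    linarith
  have hd : (0:ℝ) ≤ 8*(μ*N) := by linarith
  have cT : CauchySeq (fun k => Dh.mulVec (u k)) :=
    cauchy_aux _ βt hβt _ _ hc hd hΔt hsumt
  have cS : CauchySeq (fun k => Dv.mulVec (u k)) :=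
    cauchy_aux _ βs hβs _ _ hc hd hΔs hsums
  exact ⟨cT, cauchySeq_tendsto_of_complete cT, cS, cauchySeq_tendsto_of_complete cS⟩
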